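/- Let G be an invertible n×n real matrix. Let P be the unique positive-definite fourth root of G Gᵀ (i.e., P = sqrt(sqrt(G Gᵀ)) where sqrt denotes the unique positive-semidefinite square root) and let Q be the unique positive-definite fourth root of Gᵀ G. Then P⁻¹ G Q⁻¹ = G · (sqrt(Gᵀ G))⁻¹; moreover this matrix is orthogonal. In particular, if G = U Σ Vᵀ is a singular value decomposition with U, V orthogonal and Σ diagonal with positive entries, then P⁻¹ G Q⁻¹ = U Vᵀ. -/

import Mathlib

open Matrix
open scoped MatrixOrder

namespace Stmt15Aux


variable {n : ℕ}

lemma trace_transpose_mul_self_nonneg (M : Matrix (Fin n) (Fin n) ℝ) :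
    0 ≤ (Mᵀ * M).trace := by
  rw [Matrix.trace]
  refine Finset.sum_nonneg fun j _ => ?_
  simp only [Matrix.diag_apply, Matrix.mul_apply, Matrix.transpose_apply]
  exact Finset.sum_nonneg fun i _ => mul_self_nonneg _

lemma diag_conj (A M : Matrix (Fin n) (Fin n) ℝ) (j : Fin n) :
    (Mᵀ * A * M) j j = (fun i => M i j) ⬝ᵥ (A *ᵥ fun i => M i j) := by
  rw [Matrix.mul_assoc]
  simp only [Matrix.mul_apply, Matrix.transpose_apply, dotProduct,
    Matrix.mulVec, dotProduct]

/-- Sylvester uniqueness: if `A, B` are positive definite and `A M + M B = 0`, then `M = 0`. -/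
lemma sylvester {A B M : Matrix (Fin n) (Fin n) ℝ} (hA : A.PosDef) (hB : B.PosDef)
    (h : A * M + M * B = 0) : M = 0 := by
  have key : (Mᵀ * A * M).trace + (Mᵀ * (M * B)).trace = 0 := by
    have : Mᵀ * A * M + Mᵀ * (M * B) = Mᵀ * (A * M + M * B) := by
      rw [mul_add, Matrix.mul_assoc]
    rw [← Matrix.trace_add, this, h, Matrix.mul_zero, Matrix.trace_zero]
  -- the second trace is nonnegative
  have h2 : 0 ≤ (Mᵀ * (M * B)).trace := by
    set R := CFC.sqrt B with hRdef
    have hRR : R * R = B := CFC.sqrt_mul_sqrt_self B hB.posSemidef.nonneg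
    have hRsym : Rᵀ = R := by
      have := (CFC.sqrt_nonneg B).posSemidef.1
      rwa [Matrix.IsHermitian, Matrix.conjTranspose_eq_transpose_of_trivial] at this
    have : (Mᵀ * (M * B)).trace = ((M * R)ᵀ * (M * R)).trace := by
      rw [Matrix.transpose_mul, hRsym]
      rw [← hRR]
      rw [show Mᵀ * (M * (R * R)) = (Mᵀ * (M * R)) * R by noncomm_ring]
      rw [Matrix.trace_mul_comm, ← Matrix.mul_assoc, ← Matrix.mul_assoc]
    rw [this]
    exact trace_transpose_mul_self_nonneg _
  -- each diagonal entry of `Mᵀ A M` is nonnegative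
  have hdiag : ∀ j, 0 ≤ (Mᵀ * A * M) j j := fun j => by
    rw [diag_conj]
    simpa using hA.posSemidef.dotProduct_mulVec_nonneg (fun i => M i j)
  have h1 : (Mᵀ * A * M).trace ≤ 0 := by linarith
  have htr : (Mᵀ * A * M).trace = 0 :=
    le_antisymm h1 (Finset.sum_nonneg fun j _ => hdiag j)
  -- each column of M vanishes
  ext i j
  by_contra hMij
  have hcol : (fun i => M i j) ≠ 0 := by
    intro hc
    exact hMij (by simpa using congrFun hc i)
  have hpos : 0 < (Mᵀ * A * M) j j := by
    rw [diag_conj]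
    simpa using hA.dotProduct_mulVec_pos hcol
  have : (0:ℝ) < (Mᵀ * A * M).trace := by
    rw [Matrix.trace]
    refine Finset.sum_pos' (fun k _ => hdiag k) ⟨j, Finset.mem_univ j, hpos⟩
  rw [htr] at this
  exact lt_irrefl _ this

/-- If `A, B` are positive definite and `A² X = X B²`, then `A X = X B`. -/
lemma intertwine {A B X : Matrix (Fin n) (Fin n) ℝ} (hA : A.PosDef) (hB : B.PosDef)
    (h : A * A * X = X * (B * B)) : A * X = X * B := by
  have key : A * (A * X - X * B) + (A * X - X * B) * B = 0 := by
    have h' : A * (A * X) = X * (B * B) := by rw [← Matrix.mul_assoc, h]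
    have e : A * (A * X - X * B) + (A * X - X * B) * B
        = A * (A * X) - X * (B * B) := by noncomm_ring
    rw [e, h', sub_self]
  have := sylvester hA hB key
  rwa [sub_eq_zero] at this

/-- PosDef of a square of a PosDef matrix. -/
lemma posDef_sq {A : Matrix (Fin n) (Fin n) ℝ} (hA : A.PosDef) : (A * A).PosDef := by
  have hsym : Aᵀ = A := by
    have := hA.1
    rwa [Matrix.IsHermitian, Matrix.conjTranspose_eq_transpose_of_trivial] at this
  refine Matrix.posDef_iff_dotProduct_mulVec.mpr ⟨?_, ?_⟩
  · rw [Matrix.IsHermitian, Matrix.conjTranspose_eq_transpose_of_trivial,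
      Matrix.transpose_mul, hsym]
  · intro x hx
    have hAx : A *ᵥ x ≠ 0 := by
      intro hc
      apply hx
      have hinv := hA.isUnit
      have := congrArg (fun y => A⁻¹ *ᵥ y) hc
      simpa [Matrix.mulVec_mulVec, Matrix.nonsing_inv_mul A ((Matrix.isUnit_iff_isUnit_det A).mp hinv)] using this
    have : star x ⬝ᵥ (A * A) *ᵥ x = (A *ᵥ x) ⬝ᵥ (A *ᵥ x) := by
      simp only [star_trivial, ← Matrix.mulVec_mulVec]
      rw [Matrix.dotProduct_mulVec]
      congr 1
      conv_rhs => rw [← hsym]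
      exact (Matrix.mulVec_transpose A x).symm
    rw [this]
    have hnn : 0 ≤ (A *ᵥ x) ⬝ᵥ (A *ᵥ x) :=
      Finset.sum_nonneg fun i _ => mul_self_nonneg _
    rcases hnn.lt_or_eq with hlt | heq
    · exact hlt
    · exfalso
      apply hAx
      ext i
      have := (Finset.sum_eq_zero_iff_of_nonneg (fun i _ => mul_self_nonneg ((A *ᵥ x) i))).mp heq.symm i (Finset.mem_univ i)
      simpa [mul_self_eq_zero] using this


lemma cancel_left {n : ℕ} {A B : Matrix (Fin n) (Fin n) ℝ} (h : A * B = 1)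
    (X : Matrix (Fin n) (Fin n) ℝ) : A * (B * X) = X := by
  rw [← Matrix.mul_assoc, h, Matrix.one_mul]

end Stmt15Aux

open Stmt15Aux

/-- Reduction of Shampoo without accumulations to Spectral Gradient
Descent: let `G` be an invertible `n×n` real matrix, `P` the unique positive-definite fourth
root of `G Gᵀ` and `Q` the unique positive-definite fourth root of `Gᵀ G`. Then
`P⁻¹ G Q⁻¹ = G · (sqrt(Gᵀ G))⁻¹` (for any positive-semidefinite square root `S` of `Gᵀ G`),
this matrix is orthogonal, and if `G = U Σ Vᵀ` is an SVD with `U, V` orthogonal and `Σ`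
diagonal with positive entries then `P⁻¹ G Q⁻¹ = U Vᵀ`. -/
theorem stmt15 (n : ℕ) (G : Matrix (Fin n) (Fin n) ℝ) (hG : IsUnit G)
    (Pm Qm : Matrix (Fin n) (Fin n) ℝ)
    (hPpd : Pm.PosDef) (hP4 : Pm ^ 4 = G * Gᵀ)
    (hQpd : Qm.PosDef) (hQ4 : Qm ^ 4 = Gᵀ * G) :
    (∀ S : Matrix (Fin n) (Fin n) ℝ, S.PosSemidef → S ^ 2 = Gᵀ * G →
      Pm⁻¹ * G * Qm⁻¹ = G * S⁻¹) ∧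
    ((Pm⁻¹ * G * Qm⁻¹)ᵀ * (Pm⁻¹ * G * Qm⁻¹) = 1 ∧
      (Pm⁻¹ * G * Qm⁻¹) * (Pm⁻¹ * G * Qm⁻¹)ᵀ = 1) ∧
    (∀ (U V : Matrix (Fin n) (Fin n) ℝ) (s : Fin n → ℝ),
      U * Uᵀ = 1 → V * Vᵀ = 1 → (∀ i, 0 < s i) →
      G = U * Matrix.diagonal s * Vᵀ →
      Pm⁻¹ * G * Qm⁻¹ = U * Vᵀ) := by
  have hPd : IsUnit Pm.det := hPpd.det_pos.ne'.isUnit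
  have hQd : IsUnit Qm.det := hQpd.det_pos.ne'.isUnit
  have hPc : Pm⁻¹ * Pm = 1 := Matrix.nonsing_inv_mul Pm hPd
  have hPc' : Pm * Pm⁻¹ = 1 := Matrix.mul_nonsing_inv Pm hPd
  have hQc : Qm⁻¹ * Qm = 1 := Matrix.nonsing_inv_mul Qm hQd
  have hQc' : Qm * Qm⁻¹ = 1 := Matrix.mul_nonsing_inv Qm hQd
  -- the key intertwining identity
  have key1 : Pm * G = G * Qm := by
    have i1 : (Pm * Pm) * (Pm * Pm) * G = G * ((Qm * Qm) * (Qm * Qm)) := by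
      have e1 : (Pm * Pm) * (Pm * Pm) = Pm ^ 4 := by noncomm_ring
      have e2 : (Qm * Qm) * (Qm * Qm) = Qm ^ 4 := by noncomm_ring
      rw [e1, e2, hP4, hQ4, Matrix.mul_assoc]
    exact intertwine hPpd hQpd (intertwine (posDef_sq hPpd) (posDef_sq hQpd) i1)
  have swap : Pm⁻¹ * G = G * Qm⁻¹ := by
    have h1 : Pm⁻¹ * (Pm * G) * Qm⁻¹ = G * Qm⁻¹ := by
      rw [← Matrix.mul_assoc, hPc, Matrix.one_mul]
    have h2 : Pm⁻¹ * (G * Qm) * Qm⁻¹ = Pm⁻¹ * G := by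
      rw [Matrix.mul_assoc, Matrix.mul_assoc, hQc', Matrix.mul_one]
    rw [← h1, key1, h2]
  have eqW : Pm⁻¹ * G * Qm⁻¹ = G * (Qm⁻¹ * Qm⁻¹) := by
    rw [swap, Matrix.mul_assoc]
  have eqW' : Pm⁻¹ * G * Qm⁻¹ = Pm⁻¹ * Pm⁻¹ * G := by
    rw [Matrix.mul_assoc, ← swap, ← Matrix.mul_assoc]
  -- symmetry of inverses
  have hQsym : Qmᵀ = Qm := by
    have := hQpd.1
    rwa [Matrix.IsHermitian, Matrix.conjTranspose_eq_transpose_of_trivial] at this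
  have hPsym : Pmᵀ = Pm := by
    have := hPpd.1
    rwa [Matrix.IsHermitian, Matrix.conjTranspose_eq_transpose_of_trivial] at this
  have hQisym : (Qm⁻¹)ᵀ = Qm⁻¹ := by rw [Matrix.transpose_nonsing_inv, hQsym]
  have hPisym : (Pm⁻¹)ᵀ = Pm⁻¹ := by rw [Matrix.transpose_nonsing_inv, hPsym]
  -- part 1
  have part1 : ∀ S : Matrix (Fin n) (Fin n) ℝ, S.PosSemidef → S ^ 2 = Gᵀ * G →
      Pm⁻¹ * G * Qm⁻¹ = G * S⁻¹ := by
    intro S hS hS2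
    have hQQ : S = Qm ^ 2 := by
      rw [← CFC.sqrt_sq S hS.nonneg, hS2, ← hQ4, show Qm ^ 4 = (Qm ^ 2) ^ 2 by rw [← pow_mul],
        CFC.sqrt_sq _ ((hQpd.posSemidef).pow 2).nonneg]
    have : S⁻¹ = Qm⁻¹ * Qm⁻¹ := by
      rw [hQQ, pow_two, Matrix.mul_inv_rev]
    rw [this, eqW]
  refine ⟨part1, ⟨?_, ?_⟩, ?_⟩
  · -- WᵀW = 1
    rw [eqW]
    rw [Matrix.transpose_mul, Matrix.transpose_mul, hQisym]
    have hG4 : Gᵀ * G = Qm * (Qm * (Qm * Qm)) := by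
      rw [← hQ4]; noncomm_ring
    calc (Qm⁻¹ * Qm⁻¹) * Gᵀ * (G * (Qm⁻¹ * Qm⁻¹))
        = Qm⁻¹ * (Qm⁻¹ * ((Gᵀ * G) * (Qm⁻¹ * Qm⁻¹))) := by
          simp only [Matrix.mul_assoc]
      _ = 1 := by
          rw [hG4]
          simp only [Matrix.mul_assoc, cancel_left hQc, cancel_left hQc']
          exact hQc'
  · -- WWᵀ = 1
    rw [eqW']
    rw [Matrix.transpose_mul, Matrix.transpose_mul, hPisym]
    have hG4 : G * Gᵀ = Pm * (Pm * (Pm * Pm)) := by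
      rw [← hP4]; noncomm_ring
    calc (Pm⁻¹ * Pm⁻¹ * G) * (Gᵀ * (Pm⁻¹ * Pm⁻¹))
        = Pm⁻¹ * (Pm⁻¹ * ((G * Gᵀ) * (Pm⁻¹ * Pm⁻¹))) := by
          simp only [Matrix.mul_assoc]
      _ = 1 := by
          rw [hG4]
          simp only [Matrix.mul_assoc, cancel_left hPc, cancel_left hPc']
          exact hPc'
  · -- SVD case
    intro U V s hU hV hs hGsvd
    have hVtV : Vᵀ * V = 1 := mul_eq_one_comm.mp hV
    have hUtU : Uᵀ * U = 1 := mul_eq_one_comm.mp hU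
    set D := Matrix.diagonal s with hD
    have hDt : Dᵀ = D := Matrix.diagonal_transpose s
    set S : Matrix (Fin n) (Fin n) ℝ := V * D * Vᵀ with hSdef
    have hSpsd : S.PosSemidef := by
      have hd : (Matrix.diagonal s).PosSemidef :=
        Matrix.posSemidef_diagonal_iff.mpr fun i => (hs i).le
      have := hd.mul_mul_conjTranspose_same V
      rw [Matrix.conjTranspose_eq_transpose_of_trivial] at this
      exact this
    have hS2 : S ^ 2 = Gᵀ * G := by
      rw [hGsvd, pow_two, hSdef]
      rw [Matrix.transpose_mul, Matrix.transpose_mul, Matrix.transpose_transpose, hDt]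
      simp only [Matrix.mul_assoc, cancel_left hVtV, cancel_left hUtU]
    have hDinv : D * Matrix.diagonal (fun i => (s i)⁻¹) = 1 := by
      rw [hD, Matrix.diagonal_mul_diagonal]
      rw [show (fun i => s i * (s i)⁻¹) = fun _ => (1:ℝ) from funext fun i =>
        mul_inv_cancel₀ (hs i).ne']
      exact Matrix.diagonal_one
    have hSinv : S⁻¹ = V * Matrix.diagonal (fun i => (s i)⁻¹) * Vᵀ := by
      refine Matrix.inv_eq_right_inv ?_
      rw [hSdef]
      simp only [Matrix.mul_assoc, cancel_left hVtV, cancel_left hDinv]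
      exact hV
    rw [part1 S hSpsd hS2, hSinv, hGsvd]
    simp only [Matrix.mul_assoc, cancel_left hVtV, cancel_left hDinv]
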